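/- Fix a, b ∈ ℤ/4ℤ, R = R_{a+bw}, n ≥ 1, and a finite set S ⊆ Rⁿ, and let C be the R-submodule of Rⁿ generated by S. Then the DNA code Φ(C) = {Φ(c) : c ∈ C} ⊆ Σⁿ is closed under the reversal operation y ↦ y^R if and only if 3·g^r ∈ C for every g ∈ S. -/

import Mathlib

open Polynomial

/-- The base ring ℤ/4ℤ. -/
abbrev Z4 := ZMod 4

/-- The polynomial X² − (a + bX) over ℤ/4ℤ. -/
noncomputable def wPoly (a b : Z4) : Z4[X] := X ^ 2 - (C b * X + C a)

/-- The ring R_{a+bw} = (ℤ/4ℤ)[X]/(X² − (a + bX)); every element is uniquely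
x₀ + x₁·w with x₀, x₁ ∈ ℤ/4ℤ, and w² = a + b·w. -/
abbrev Rw (a b : Z4) : Type := AdjoinRoot (wPoly a b)

/-- The element w of R_{a+bw}. -/
noncomputable def ww (a b : Z4) : Rw a b := AdjoinRoot.root _

instance (a b : Z4) : Nonempty (Rw a b) := ⟨0⟩

/-- The Gau map expressed on coordinates:  ψ(x₀, x₁) is the DNA pair (in Fin 4 × Fin 4,
with A,G,C,T encoded as 0,1,2,3) assigned to the ring element x₀ + x₁·w. -/
def psi (p : Z4 × Z4) : Fin 4 × Fin 4 :=
  match p.1.val, p.2.val with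
  | 0, 0 => (3, 3)
  | 1, 0 => (0, 1)
  | 2, 0 => (2, 2)
  | 3, 0 => (1, 0)
  | 0, 1 => (0, 2)
  | 1, 1 => (0, 3)
  | 2, 1 => (1, 3)
  | 3, 1 => (1, 2)
  | 0, 2 => (1, 1)
  | 1, 2 => (2, 3)
  | 2, 2 => (0, 0)
  | 3, 2 => (3, 2)
  | 0, 3 => (2, 0)
  | 1, 3 => (2, 1)
  | 2, 3 => (3, 1)
  | _, _ => (3, 0)

/-- `phi` is a Gau map on R_{a+bw}: on the element x₀ + x₁·w it takes the value
prescribed by the table ψ. -/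
def IsGauMap (a b : Z4) (phi : Rw a b → Fin 4 × Fin 4) : Prop :=
  ∀ x₀ x₁ : Z4,
    phi (algebraMap Z4 (Rw a b) x₀ + algebraMap Z4 (Rw a b) x₁ * ww a b) = psi (x₀, x₁)

/-- Coordinatewise extension Φ of a Gau map φ to vectors. -/
def PhiV (a b : Z4) (phi : Rw a b → Fin 4 × Fin 4) (n : ℕ) (x : Fin n → Rw a b) :
    Fin n → Fin 4 × Fin 4 :=
  fun j => phi (x j)

/-- Inverse Φ⁻¹ of the coordinatewise extension of a Gau map. -/
noncomputable def PhiVinv (a b : Z4) (phi : Rw a b → Fin 4 × Fin 4) (n : ℕ)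
    (y : Fin n → Fin 4 × Fin 4) : Fin n → Rw a b :=
  fun j => Function.invFun phi (y j)

/-- DNA-string reversal y ↦ y^R on Σⁿ: read the length-2n DNA string backwards,
i.e. reverse the order of the pairs and swap the two entries of each pair. -/
def dnaRev (n : ℕ) (y : Fin n → Fin 4 × Fin 4) : Fin n → Fin 4 × Fin 4 :=
  fun j => ((y j.rev).2, (y j.rev).1)

/-- Watson–Crick complement y ↦ y^C on Σⁿ. -/
def dnaCompl (n : ℕ) (y : Fin n → Fin 4 × Fin 4) : Fin n → Fin 4 × Fin 4 :=
  fun j => (3 - (y j).1, 3 - (y j).2)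

/-- Vector reversal g ↦ g^r on Rⁿ. -/
def vecRev {α : Type*} (n : ℕ) (x : Fin n → α) : Fin n → α :=
  fun j => x j.rev

lemma wPoly_monic (a b : Z4) : (wPoly a b).Monic := by
  unfold wPoly; monicity!

lemma wPoly_deg (a b : Z4) : (wPoly a b).degree = 2 := by
  have : Nontrivial Z4 := ⟨0, 1, by decide⟩
  unfold wPoly
  compute_degree!

lemma Rw.repr (a b : Z4) (u : Rw a b) :
    ∃ x₀ x₁ : Z4, u = algebraMap Z4 (Rw a b) x₀ + algebraMap Z4 (Rw a b) x₁ * ww a b := by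
  haveI : Nontrivial Z4 := ⟨0, 1, by decide⟩
  obtain ⟨p, rfl⟩ := AdjoinRoot.mk_surjective u
  have hm := wPoly_monic a b
  have hdvd : wPoly a b ∣ p - p %ₘ wPoly a b :=
    ⟨p /ₘ wPoly a b, by rw [eq_comm, eq_sub_iff_add_eq, add_comm,
      Polynomial.modByMonic_add_div p (wPoly a b)]⟩
  have hmk : AdjoinRoot.mk (wPoly a b) p = AdjoinRoot.mk (wPoly a b) (p %ₘ wPoly a b) := by
    rw [AdjoinRoot.mk_eq_mk]; exact hdvd
  have hdeg : (p %ₘ wPoly a b).degree ≤ 1 := by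
    have h2 := wPoly_deg a b
    have hlt := Polynomial.degree_modByMonic_lt p hm
    rw [h2] at hlt
    exact Order.le_of_lt_succ (by exact_mod_cast hlt)
  refine ⟨(p %ₘ wPoly a b).coeff 0, (p %ₘ wPoly a b).coeff 1, ?_⟩
  rw [hmk, Polynomial.eq_X_add_C_of_degree_le_one hdeg]
  simp [ww, map_add, map_mul, add_comm]

lemma psi_inj : Function.Injective psi := by decide

lemma psi_swap : ∀ x₀ x₁ : Z4, psi (3 * x₀, 3 * x₁) = ((psi (x₀, x₁)).2, (psi (x₀, x₁)).1) := by
  decide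

lemma phi_inj (a b : Z4) (phi : Rw a b → Fin 4 × Fin 4) (hphi : IsGauMap a b phi) :
    Function.Injective phi := by
  intro u v h
  obtain ⟨u0, u1, rfl⟩ := Rw.repr a b u
  obtain ⟨v0, v1, rfl⟩ := Rw.repr a b v
  rw [hphi, hphi] at h
  have := psi_inj h
  rw [Prod.mk.injEq] at this
  rw [this.1, this.2]

lemma phi_three (a b : Z4) (phi : Rw a b → Fin 4 × Fin 4) (hphi : IsGauMap a b phi)
    (u : Rw a b) : phi (3 * u) = ((phi u).2, (phi u).1) := by
  obtain ⟨x0, x1, rfl⟩ := Rw.repr a b u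
  have h3 : (3 : Rw a b) = algebraMap Z4 (Rw a b) 3 := by
    rw [map_ofNat]
  have : (3 : Rw a b) * (algebraMap Z4 (Rw a b) x0 + algebraMap Z4 (Rw a b) x1 * ww a b)
      = algebraMap Z4 (Rw a b) (3 * x0) + algebraMap Z4 (Rw a b) (3 * x1) * ww a b := by
    rw [map_mul, map_mul, ← h3]; ring
  rw [this, hphi, hphi, psi_swap]

theorem dna_code_reversible_iff (a b : Z4) (n : ℕ) (hn : 1 ≤ n)
    (phi : Rw a b → Fin 4 × Fin 4) (hphi : IsGauMap a b phi)
    (S : Set (Fin n → Rw a b)) (hS : S.Finite) :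
    (∀ y ∈ PhiV a b phi n '' (Submodule.span (Rw a b) S : Set (Fin n → Rw a b)),
        dnaRev n y ∈ PhiV a b phi n '' (Submodule.span (Rw a b) S : Set (Fin n → Rw a b))) ↔
      ∀ g ∈ S, (3 : Rw a b) • vecRev n g ∈ Submodule.span (Rw a b) S := by
  have key : ∀ x : Fin n → Rw a b,
      dnaRev n (PhiV a b phi n x) = PhiV a b phi n ((3 : Rw a b) • vecRev n x) := by
    intro x
    funext j
    simp only [dnaRev, PhiV, Pi.smul_apply, smul_eq_mul, vecRev,
      phi_three a b phi hphi]
  constructor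
  · intro h g hg
    have hgC : g ∈ Submodule.span (Rw a b) S := Submodule.subset_span hg
    obtain ⟨c, hc, hce⟩ := h (PhiV a b phi n g) ⟨g, hgC, rfl⟩
    rw [key] at hce
    have : c = (3 : Rw a b) • vecRev n g := by
      funext j
      exact phi_inj a b phi hphi (congrFun hce j)
    rwa [← this]
  · intro h y hy
    obtain ⟨c, hc, rfl⟩ := hy
    refine ⟨(3 : Rw a b) • vecRev n c, ?_, (key c).symm⟩
    induction hc using Submodule.span_induction with
    | mem x hx => exact h x hx
    | zero =>
        have : vecRev n (0 : Fin n → Rw a b) = 0 := rfl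
        rw [this, smul_zero]; exact Submodule.zero_mem _
    | add x y hx hy ihx ihy =>
        have : vecRev n (x + y) = vecRev n x + vecRev n y := rfl
        rw [this, smul_add]; exact Submodule.add_mem _ ihx ihy
    | smul r x hx ih =>
        have : vecRev n (r • x) = r • vecRev n x := rfl
        rw [this, smul_comm]; exact Submodule.smul_mem _ r ih
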